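/- Let K be a field of characteristic zero and (L,[·,·]) a Lie algebra over K. If ·₁ and ·₂ are transposed Poisson structures on (L,[·,·]) that are orthogonal, i.e., a·₁b ∈ Ann(L,·₂) and a·₂b ∈ Ann(L,·₁) for all a,b ∈ L, then the operation a*b := a·₁b + a·₂b is a transposed Poisson structure on (L,[·,·]). -/
import Mathlib


open scoped Classical

noncomputable section

/-- A transposed Poisson structure on a Lie algebra `(L, ⁅·,·⁆)`: a bilinear, commutative,
associative product satisfying `2 • z · ⁅x, y⁆ = ⁅z · x, y⁆ + ⁅x, z · y⁆`. -/
def IsTPStructure (K L : Type*) [Field K] [LieRing L] [LieAlgebra K L]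
    (mul : L →ₗ[K] L →ₗ[K] L) : Prop :=
  (∀ a b : L, mul a b = mul b a) ∧
  (∀ a b c : L, mul (mul a b) c = mul a (mul b c)) ∧
  (∀ x y z : L, (2 : K) • mul z ⁅x, y⁆ = ⁅mul z x, y⁆ + ⁅x, mul z y⁆)

/-- the orthogonal sum of two transposed Poisson structures is a
transposed Poisson structure.  Orthogonality: all `·₁`-products lie in `Ann(L, ·₂)`
and vice versa. -/
theorem statement2 (K L : Type*) [Field K] [CharZero K] [LieRing L] [LieAlgebra K L]
    (mul1 mul2 : L →ₗ[K] L →ₗ[K] L)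
    (h1 : IsTPStructure K L mul1) (h2 : IsTPStructure K L mul2)
    (horth1 : ∀ a b c : L, mul2 (mul1 a b) c = 0)
    (horth2 : ∀ a b c : L, mul1 (mul2 a b) c = 0) :
    IsTPStructure K L (mul1 + mul2) := by
  obtain ⟨c1, a1, t1⟩ := h1
  obtain ⟨c2, a2, t2⟩ := h2
  refine ⟨fun a b => ?_, fun a b c => ?_, fun x y z => ?_⟩
  · simp [c1 a b, c2 a b]
  · have e1 : mul1 (mul2 a b) = 0 := by ext d; simpa using horth2 a b d
    have e2 : mul2 (mul1 a b) = 0 := by ext d; simpa using horth1 a b d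
    simp [map_add, a1, a2, e1, e2, horth1, horth2,
      c1 a (mul2 b c), c2 a (mul1 b c), horth1 b c a, horth2 b c a]
  · simp only [LinearMap.add_apply, map_add, smul_add, t1, t2]
    simp only [add_lie, lie_add]; abel
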